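/- Let μ > 0, σ > 0 and x0 ≥ 0. For every real θ < 0 with θ ≠ −2μ/σ², the Laplace transform of the one-dimensional Green's function g satisfies ∫₀^∞ e^{θx} g(x) dx = −(e^{θx0} + θ·(σ²/(2μ))·e^{−(2μ/σ²)x0}) / (μθ + (1/2)σ²θ²). -/

import Mathlib

open MeasureTheory

lemma hasDerivAt_exp_mul_div (c x : ℝ) (hc : c ≠ 0) :
    HasDerivAt (fun y : ℝ => Real.exp (c * y) / c) (Real.exp (c * x)) x := by
  have h := (((hasDerivAt_id x).const_mul c).exp).div_const c
  simpa [mul_one, mul_div_cancel_right₀ _ hc] using h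

lemma integral_exp_mul_Ioi' (c a : ℝ) (hc : c < 0) :
    ∫ x in Set.Ioi a, Real.exp (c * x) = -Real.exp (c * a) / c := by
  have hint : IntegrableOn (fun x : ℝ => Real.exp (c * x)) (Set.Ioi a) := by
    have := exp_neg_integrableOn_Ioi a (b := -c) (by linarith)
    simpa using this
  have htend : Filter.Tendsto (fun x : ℝ => Real.exp (c * x) / c) Filter.atTop (nhds 0) := by
    have h1 : Filter.Tendsto (fun x : ℝ => c * x) Filter.atTop Filter.atBot :=
      Filter.tendsto_id.const_mul_atTop_of_neg hc
    have h2 := (Real.tendsto_exp_atBot.comp h1).div_const c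
    simpa using h2
  have := integral_Ioi_of_hasDerivAt_of_tendsto' (a := a)
    (f := fun y : ℝ => Real.exp (c * y) / c) (f' := fun x : ℝ => Real.exp (c * x)) (m := 0)
    (fun x _ => hasDerivAt_exp_mul_div c x hc.ne) hint htend
  rw [this]; ring

lemma integral_exp_mul (c b : ℝ) (hc : c ≠ 0) :
    ∫ x in (0:ℝ)..b, Real.exp (c * x) = (Real.exp (c * b) - 1) / c := by
  have := intervalIntegral.integral_eq_sub_of_hasDerivAt
    (f := fun y : ℝ => Real.exp (c * y) / c) (f' := fun x : ℝ => Real.exp (c * x))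
    (a := (0:ℝ)) (b := b)
    (fun x _ => hasDerivAt_exp_mul_div c x hc)
    ((Real.continuous_exp.comp (continuous_const.mul continuous_id)).intervalIntegrable 0 b)
  rw [this]
  simp [sub_div]

/-- The Green's function of the one-dimensional reflected Brownian motion with drift
`μ > 0` and variance `σ²`, started from `x0`. -/
noncomputable def green1D (μ σ x0 : ℝ) (x : ℝ) : ℝ :=
  if x < x0 then (1/μ) * Real.exp ((2*μ/σ^2) * (x - x0)) else 1/μ

/-- Laplace transform of the one-dimensional Green's function. -/
theorem stmt_17 (μ σ x0 : ℝ) (hμ : 0 < μ) (hσ : 0 < σ) (hx0 : 0 ≤ x0) :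
    ∀ θ : ℝ, θ < 0 → θ ≠ -2*μ/σ^2 →
      ∫ x in Set.Ioi (0:ℝ), Real.exp (θ * x) * green1D μ σ x0 x =
        -(Real.exp (θ * x0) + θ * (σ^2/(2*μ)) * Real.exp (-(2*μ/σ^2) * x0))
          / (μ * θ + (1/2) * σ^2 * θ^2) := by
  intro θ hθ hθne
  set a : ℝ := 2*μ/σ^2 with ha_def
  have hσ2 : (0:ℝ) < σ^2 := by positivity
  have ha : 0 < a := by positivity
  have hca : θ + a ≠ 0 := by
    intro h
    apply hθne
    have : θ = -a := by linarith
    rw [this, ha_def]; ring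
  -- split the integral
  have hsplit : Set.Ioi (0:ℝ) = Set.Ioc 0 x0 ∪ Set.Ioi x0 := (Set.Ioc_union_Ioi_eq_Ioi hx0).symm
  have hmeas : MeasurableSet (Set.Ioi x0) := measurableSet_Ioi
  have hdisj : Disjoint (Set.Ioc (0:ℝ) x0) (Set.Ioi x0) := Set.Ioc_disjoint_Ioi le_rfl
  -- integrands on each piece
  have heq1 : Set.EqOn (fun x => Real.exp (θ * x) * green1D μ σ x0 x)
      (fun x => (1/μ) * Real.exp (-(a * x0)) * Real.exp ((θ + a) * x)) (Set.Ioc 0 x0) := by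
    intro x hx
    simp only [green1D, ← ha_def]
    rcases lt_or_eq_of_le hx.2 with h | h
    · rw [if_pos h, show a*(x-x0) = a*x - a*x0 by ring, show (θ+a)*x = θ*x + a*x by ring,
        Real.exp_sub, Real.exp_add, Real.exp_neg]
      field_simp
    · rw [if_neg (by simp [h]), h, show (θ+a)*x0 = θ*x0 + a*x0 by ring,
        Real.exp_add, Real.exp_neg]
      field_simp
  have heq2 : Set.EqOn (fun x => Real.exp (θ * x) * green1D μ σ x0 x)
      (fun x => (1/μ) * Real.exp (θ * x)) (Set.Ioi x0) := by
    intro x hx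
    simp only [green1D]
    rw [if_neg (by simpa using (le_of_lt hx)), mul_comm]
  -- integrability
  have hint2 : IntegrableOn (fun x => (1/μ) * Real.exp (θ * x)) (Set.Ioi x0) := by
    have := exp_neg_integrableOn_Ioi x0 (b := -θ) (by linarith)
    simpa [IntegrableOn] using this.const_mul (1/μ)
  have hint1 : IntegrableOn (fun x => (1/μ) * Real.exp (-(a * x0)) * Real.exp ((θ + a) * x))
      (Set.Ioc (0:ℝ) x0) := by
    apply Continuous.integrableOn_Ioc
    exact continuous_const.mul (Real.continuous_exp.comp (continuous_const.mul continuous_id))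
  rw [hsplit, setIntegral_union hdisj hmeas
      ((integrableOn_congr_fun heq1 measurableSet_Ioc).mpr hint1)
      ((integrableOn_congr_fun heq2 measurableSet_Ioi).mpr hint2),
    setIntegral_congr_fun measurableSet_Ioc heq1,
    setIntegral_congr_fun measurableSet_Ioi heq2]
  -- compute each piece
  have hI1 : ∫ x in Set.Ioc (0:ℝ) x0, (1/μ) * Real.exp (-(a * x0)) * Real.exp ((θ + a) * x)
      = (1/μ) * Real.exp (-(a * x0)) * ((Real.exp ((θ + a) * x0) - 1) / (θ + a)) := by
    rw [← intervalIntegral.integral_of_le hx0, intervalIntegral.integral_const_mul,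
      integral_exp_mul _ _ hca]
  have hI2 : ∫ x in Set.Ioi x0, (1/μ) * Real.exp (θ * x)
      = (1/μ) * (-Real.exp (θ * x0) / θ) := by
    rw [MeasureTheory.integral_const_mul, integral_exp_mul_Ioi' _ _ hθ]
  rw [hI1, hI2]
  have hE : Real.exp ((θ + a) * x0) = Real.exp (θ * x0) / Real.exp (-(a * x0)) := by
    rw [eq_div_iff (Real.exp_ne_zero _), ← Real.exp_add]; ring_nf
  have he2 : Real.exp (-(2*μ/σ^2) * x0) = Real.exp (-(a * x0)) := by rw [ha_def]; ring_nf
  have h1a : σ^2/(2*μ) = 1/a := by rw [ha_def, one_div, inv_div]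
  have hσa : σ^2 = 2*μ/a := by rw [ha_def]; field_simp
  have hden : μ * θ + (1/2) * σ^2 * θ^2 = μ*θ*(θ+a)/a := by
    rw [hσa]; field_simp; ring
  rw [hE, he2, h1a, hden]
  generalize Real.exp (θ * x0) = E1
  generalize hE2 : Real.exp (-(a * x0)) = E2
  have hE2ne : E2 ≠ 0 := hE2 ▸ Real.exp_ne_zero _
  have hθ' : θ ≠ 0 := hθ.ne
  field_simp
  ring
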